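/- Suppose a(t) ∈ ℂ[[t]] has the form a(t) = t^{v₀} + a_M t^M + (higher order terms) with M > v₀ and v₀ ≥ 1. Let b(t) = Σ_{n≥1} b_n t^n be a formal change of variable with a(b(t)) = t^{v₀}. Then b₁^{v₀} = 1, b₂ = b₃ = ... = b_{M-v₀} = 0, and if a_M ≠ 0 then b_{M-v₀+1} ≠ 0. -/

import Mathlib

/-- Formal composition `a ∘ b` of one-variable power series, valid (and agreeing with
the usual substitution) when `b` has zero constant term. -/
noncomputable def pcomp (a b : PowerSeries ℂ) : PowerSeries ℂ :=
  PowerSeries.mk fun n =>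
    ∑ k ∈ Finset.range (n + 1), PowerSeries.coeff (R := ℂ) k a * PowerSeries.coeff (R := ℂ) n (b ^ k)

open PowerSeries Finset

lemma term_coeff (r : ℂ) (e : PowerSeries ℂ) (i m c n : ℕ) :
    PowerSeries.coeff (R := ℂ) n ((PowerSeries.C (R := ℂ) r * X) ^ i * ((X:PowerSeries ℂ) ^ j * e) ^ m * (c : PowerSeries ℂ))
      = r ^ i * c * (if i + j * m ≤ n then PowerSeries.coeff (R := ℂ) (n - (i + j * m)) (e ^ m) else 0) := by
  have h : (PowerSeries.C (R := ℂ) r * X) ^ i * ((X:PowerSeries ℂ) ^ j * e) ^ m * (c : PowerSeries ℂ)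
      = PowerSeries.C (R := ℂ) (r ^ i * c) * ((X:PowerSeries ℂ) ^ (i + j * m) * e ^ m) := by
    rw [map_mul, map_pow, ← map_natCast (PowerSeries.C (R := ℂ)) c]
    ring
  rw [h, PowerSeries.coeff_C_mul, PowerSeries.coeff_X_pow_mul']

lemma coeff_pow_lt (b : PowerSeries ℂ) (h0 : PowerSeries.coeff (R := ℂ) 0 b = 0) {k n : ℕ} (hn : n < k) :
    PowerSeries.coeff (R := ℂ) n (b ^ k) = 0 := by
  have hx : (X : PowerSeries ℂ) ∣ b := X_dvd_iff.mpr (by simpa using h0)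
  exact X_pow_dvd_iff.mp (pow_dvd_pow_of_dvd hx k) n hn

lemma coeff_pow_self (b : PowerSeries ℂ) (h0 : PowerSeries.coeff (R := ℂ) 0 b = 0) (k : ℕ) :
    PowerSeries.coeff (R := ℂ) k (b ^ k) = (PowerSeries.coeff (R := ℂ) 1 b) ^ k := by
  obtain ⟨d, rfl⟩ := X_dvd_iff.mpr (show PowerSeries.constantCoeff (R := ℂ) b = 0 by simpa using h0)
  rw [mul_pow]
  have h1 : PowerSeries.coeff (R := ℂ) k ((X:PowerSeries ℂ)^k * d^k) = PowerSeries.coeff (R := ℂ) 0 (d^k) := by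
    simpa using PowerSeries.coeff_X_pow_mul (d^k) k 0
  have h2 : PowerSeries.coeff (R := ℂ) 1 (X * d) = PowerSeries.coeff (R := ℂ) 0 d := by
    simpa using PowerSeries.coeff_X_pow_mul d 1 0
  rw [h1, h2]
  simp [PowerSeries.coeff_zero_eq_constantCoeff, map_pow]

lemma coeff_pow_key (b : PowerSeries ℂ) (h0 : PowerSeries.coeff (R := ℂ) 0 b = 0) (j k : ℕ)
    (hj : 2 ≤ j) (hmid : ∀ i, 2 ≤ i → i < j → PowerSeries.coeff (R := ℂ) i b = 0) :
    PowerSeries.coeff (R := ℂ) (k + j - 1) (b ^ k)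
      = k * (PowerSeries.coeff (R := ℂ) 1 b) ^ (k - 1) * PowerSeries.coeff (R := ℂ) j b := by
  set b₁ := PowerSeries.coeff (R := ℂ) 1 b with hb₁
  have hc : ∀ i < j, PowerSeries.coeff (R := ℂ) i (b - PowerSeries.C (R := ℂ) b₁ * X) = 0 := by
    intro i hi
    rcases Nat.lt_or_ge i 2 with h2 | h2
    · interval_cases i
      · simpa [PowerSeries.coeff_C_mul] using h0
      · simp [PowerSeries.coeff_C_mul, hb₁]
    · rw [map_sub, hmid i h2 hi, PowerSeries.coeff_C_mul, PowerSeries.coeff_X,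
        if_neg (by omega : ¬ i = 1)]
      ring
  obtain ⟨e, he⟩ := X_pow_dvd_iff.mpr hc
  have hb : b = PowerSeries.C (R := ℂ) b₁ * X + X ^ j * e := by
    rw [← he]; ring
  have hej : PowerSeries.coeff (R := ℂ) 0 e = PowerSeries.coeff (R := ℂ) j b := by
    have h1 : PowerSeries.coeff (R := ℂ) j ((X:PowerSeries ℂ) ^ j * e) = PowerSeries.coeff (R := ℂ) 0 e := by
      simpa using PowerSeries.coeff_X_pow_mul e j 0
    rw [← he, map_sub, PowerSeries.coeff_C_mul, PowerSeries.coeff_X,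
      if_neg (by omega : ¬ j = 1)] at h1
    rw [← h1]; ring
  rcases Nat.eq_zero_or_pos k with rfl | hk
  · simp [PowerSeries.coeff_one]
    omega
  have hch : (k.choose (k - 1)) = k := by
    have := Nat.choose_symm (by omega : 1 ≤ k) (n := k)
    rw [(by omega : k - 1 = k - 1)] at this
    rw [this, Nat.choose_one_right]
  rw [hb, add_pow, map_sum, Finset.sum_eq_single (k - 1)]
  · rw [term_coeff, (by omega : k - (k - 1) = 1),
      if_pos (by omega : k - 1 + j * 1 ≤ k + j - 1),
      (by omega : k + j - 1 - (k - 1 + j * 1) = 0), pow_one, hej, hch, ← hb]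
    ring
  · intro i hi hne
    rw [Finset.mem_range] at hi
    rw [term_coeff]
    rcases Nat.lt_or_ge i (k - 1) with hik | hik
    · rw [if_neg, mul_zero]
      have hm2 : 2 ≤ k - i := by omega
      have heq : j * (k - i) = j * 2 + j * (k - i - 2) := by
        rw [← Nat.mul_add]
        congr 1
        omega
      have hB : 2 * (k - i - 2) ≤ j * (k - i - 2) := Nat.mul_le_mul_right _ hj
      omega
    · have hik' : i = k := by omega
      subst hik'
      rw [(by omega : i - i = 0), if_pos (by omega : i + j * 0 ≤ i + j - 1), pow_zero,
        (by omega : i + j - 1 - (i + j * 0) = j - 1), PowerSeries.coeff_one,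
        if_neg (by omega : ¬ (j - 1 = 0))]
      ring
  · intro h
    exact absurd (Finset.mem_range.mpr (by omega)) h

theorem change_of_variable_coefficients (a b : PowerSeries ℂ) (v₀ M : ℕ)
    (hv₀ : 1 ≤ v₀) (hM : v₀ < M)
    (hlow : ∀ k < v₀, PowerSeries.coeff (R := ℂ) k a = 0)
    (hv : PowerSeries.coeff (R := ℂ) v₀ a = 1)
    (hmid : ∀ k, v₀ < k → k < M → PowerSeries.coeff (R := ℂ) k a = 0)
    (hb0 : PowerSeries.coeff (R := ℂ) 0 b = 0)
    (hcomp : pcomp a b = PowerSeries.X ^ v₀) :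
    (PowerSeries.coeff (R := ℂ) 1 b) ^ v₀ = 1 ∧
    (∀ k, 2 ≤ k → k ≤ M - v₀ → PowerSeries.coeff (R := ℂ) k b = 0) ∧
    (PowerSeries.coeff (R := ℂ) M a ≠ 0 → PowerSeries.coeff (R := ℂ) (M - v₀ + 1) b ≠ 0) := by
  have hco : ∀ n, ∑ k ∈ Finset.range (n + 1),
      PowerSeries.coeff (R := ℂ) k a * PowerSeries.coeff (R := ℂ) n (b ^ k)
        = if n = v₀ then (1 : ℂ) else 0 := by
    intro n
    have := congrArg (PowerSeries.coeff (R := ℂ) n) hcomp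
    rwa [pcomp, PowerSeries.coeff_mk, PowerSeries.coeff_X_pow] at this
  set b₁ := PowerSeries.coeff (R := ℂ) 1 b with hb₁
  -- Step 1
  have h1 : b₁ ^ v₀ = 1 := by
    have h := hco v₀
    rw [if_pos rfl, Finset.sum_eq_single v₀] at h
    · rwa [hv, one_mul, coeff_pow_self b hb0] at h
    · intro k hk hne
      rw [Finset.mem_range] at hk
      rw [hlow k (by omega), zero_mul]
    · intro h'
      exact absurd (Finset.mem_range.mpr (by omega)) h'
  have hb1ne : b₁ ≠ 0 := by
    intro h
    rw [h, zero_pow (by omega : v₀ ≠ 0)] at h1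
    exact one_ne_zero h1.symm
  -- Step 2
  have h2 : ∀ k, 2 ≤ k → k ≤ M - v₀ → PowerSeries.coeff (R := ℂ) k b = 0 := by
    intro j
    induction j using Nat.strong_induction_on with
    | _ j IH =>
      intro hj2 hjM
      have hn := hco (v₀ + j - 1)
      rw [if_neg (by omega : ¬ v₀ + j - 1 = v₀), Finset.sum_eq_single v₀] at hn
      · rw [hv, one_mul] at hn
        have hkey := coeff_pow_key b hb0 j v₀ hj2
          (fun i hi2 hij => IH i hij hi2 (by omega))
        rw [hkey] at hn
        have hv0ne : (v₀ : ℂ) ≠ 0 := Nat.cast_ne_zero.mpr (by omega)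
        have := mul_eq_zero.mp hn
        rcases this with h | h
        · rcases mul_eq_zero.mp h with h' | h'
          · exact absurd h' hv0ne
          · exact absurd h' (pow_ne_zero _ hb1ne)
        · exact h
      · intro k hk hne
        rw [Finset.mem_range] at hk
        rcases Nat.lt_or_ge k v₀ with hkv | hkv
        · rw [hlow k hkv, zero_mul]
        · rw [hmid k (by omega) (by omega), zero_mul]
      · intro h'
        exact absurd (Finset.mem_range.mpr (by omega)) h'
  refine ⟨h1, h2, ?_⟩
  -- Step 3
  intro haM hcontra
  have hn := hco M
  rw [if_neg (by omega : ¬ M = v₀), Finset.sum_range_succ, Finset.sum_eq_single v₀] at hn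
  · have hkey := coeff_pow_key b hb0 (M - v₀ + 1) v₀ (by omega)
      (fun i hi2 hij => h2 i hi2 (by omega))
    rw [(by omega : v₀ + (M - v₀ + 1) - 1 = M)] at hkey
    rw [hv, one_mul, hkey, hcontra, mul_zero, zero_add,
      coeff_pow_self b hb0] at hn
    rcases mul_eq_zero.mp hn with h | h
    · exact haM h
    · exact pow_ne_zero _ hb1ne h
  · intro k hk hne
    rw [Finset.mem_range] at hk
    rcases Nat.lt_or_ge k v₀ with hkv | hkv
    · rw [hlow k hkv, zero_mul]
    · rw [hmid k (by omega) (by omega), zero_mul]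
  · intro h'
    exact absurd (Finset.mem_range.mpr (by omega)) h'
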